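/- Let m ≥ 1 and let ψ : ℝ → ℂ be integrable with ‖ψ‖₁ ≤ A. Define the (m+1)-linear form Λ(F₀,…,F_m) := ∫_{ℝ^{m+1}} Πᵢ₌₀ᵐ Fᵢ(x_{(i)}) ψ(x₀+⋯+x_m) dx, where x_{(i)} ∈ ℝᵐ denotes x with the i-th coordinate omitted. Then for any Hölder tuple 1 ≤ p₀,…,p_m ≤ ∞ with Σᵢ 1/pᵢ = 1, one has |Λ(F₀,…,F_m)| ≤ C_m · A · Πᵢ ‖Fᵢ‖_{pᵢ} for a constant C_m depending only on m. -/

import Mathlib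

open MeasureTheory
open scoped ENNReal BigOperators

/-- Hölder's inequality for a finite product of complex functions. -/
private lemma holder_prod {α : Type*} [MeasurableSpace α] {μ : Measure α} {ι : Type*}
    (s : Finset ι) (p : ι → ℝ≥0∞) (f : ι → α → ℂ)
    (hf : ∀ i ∈ s, AEStronglyMeasurable (f i) μ) {q : ℝ≥0∞}
    (hq : q⁻¹ = ∑ i ∈ s, (p i)⁻¹) :
    eLpNorm (fun a => ∏ i ∈ s, f i a) q μ ≤ ∏ i ∈ s, eLpNorm (f i) (p i) μ := by
  induction s using Finset.cons_induction generalizing q with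
  | empty =>
    simp only [Finset.sum_empty] at hq
    obtain rfl : q = ∞ := ENNReal.inv_eq_zero.mp hq
    simp only [Finset.prod_empty]
    rw [eLpNorm_exponent_top]
    calc eLpNormEssSup (fun _ : α => (1 : ℂ)) μ ≤ ENNReal.ofReal 1 :=
          eLpNormEssSup_le_of_ae_bound (C := 1)
            (Filter.Eventually.of_forall fun _ => by simp)
      _ = 1 := ENNReal.ofReal_one
  | cons i s his ih =>
    rw [Finset.sum_cons] at hq
    rw [Finset.prod_cons]
    have hfs : AEStronglyMeasurable (fun a => ∏ j ∈ s, f j a) μ := by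
      simpa only [← Finset.prod_apply] using
        Finset.aestronglyMeasurable_prod s (fun j hj => hf j (Finset.mem_cons_of_mem hj))
    have hkey : eLpNorm (fun a => f i a * ∏ j ∈ s, f j a) q μ
        ≤ eLpNorm (f i) (p i) μ * eLpNorm (fun a => ∏ j ∈ s, f j a) ((∑ j ∈ s, (p j)⁻¹)⁻¹) μ := by
      have h := eLpNorm_smul_le_mul_eLpNorm (μ := μ) (p := p i) (q := (∑ j ∈ s, (p j)⁻¹)⁻¹)
        (r := q) hfs (hf i (Finset.mem_cons_self i s)) (hpqr := ?_)
      · simpa only [Pi.smul_apply', Pi.smul_apply, smul_eq_mul, Pi.mul_def] using h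
      · constructor
        rw [inv_inv, hq]
    calc eLpNorm (fun a => ∏ j ∈ Finset.cons i s his, f j a) q μ
        = eLpNorm (fun a => f i a * ∏ j ∈ s, f j a) q μ := by
          simp only [Finset.prod_cons]
      _ ≤ _ := hkey
      _ ≤ eLpNorm (f i) (p i) μ * ∏ j ∈ s, eLpNorm (f j) (p j) μ := by
          gcongr
          exact ih (fun j hj => hf j (Finset.mem_cons_of_mem hj)) (inv_inv _)

private lemma measurePreserving_cons_aux {q : ℕ} (φ : (Fin q → ℝ) → ℝ → ℝ)
    (hφ : Measurable (Function.uncurry φ))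
    (h : ∀ w, MeasurePreserving (φ w) volume volume) :
    MeasurePreserving
      (fun z : ℝ × (Fin q → ℝ) => (Fin.cons (φ z.2 z.1) z.2 : Fin (q + 1) → ℝ))
      (volume.prod volume) volume := by
  have h1 : MeasurePreserving
      (fun z : (Fin q → ℝ) × ℝ => (z.1, φ z.1 z.2)) (volume.prod volume) (volume.prod volume) :=
    (MeasurePreserving.id volume).skew_product hφ
      (Filter.Eventually.of_forall fun w => (h w).map_eq)
  have h0 := (volume_preserving_piFinSuccAbove (fun _ : Fin (q + 1) => ℝ) 0).symm
  have H := h0.comp ((Measure.measurePreserving_swap (μ := volume) (ν := volume)).comp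
      (h1.comp (Measure.measurePreserving_swap (μ := volume) (ν := volume))))
  have hfun : (fun z : ℝ × (Fin q → ℝ) => (Fin.cons (φ z.2 z.1) z.2 : Fin (q + 1) → ℝ))
      = (⇑(MeasurableEquiv.piFinSuccAbove (fun _ : Fin (q + 1) => ℝ) 0).symm) ∘
          Prod.swap ∘ (fun z : (Fin q → ℝ) × ℝ => (z.1, φ z.1 z.2)) ∘ Prod.swap := by
    funext z
    simp [MeasurableEquiv.piFinSuccAbove_symm_apply, Fin.insertNthEquiv,
      Fin.insertNth_zero']
  rw [hfun]
  exact H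

private lemma qmp_succAbove {N : ℕ} (i : Fin (N + 1)) :
    Measure.QuasiMeasurePreserving
      (fun (x : Fin (N + 1) → ℝ) (j : Fin N) => x (i.succAbove j)) volume volume := by
  refine ⟨measurable_pi_lambda _ fun j => measurable_pi_apply _, ?_⟩
  have he := volume_preserving_piFinSuccAbove (fun _ : Fin (N + 1) => ℝ) i
  have hmap : Measure.map (fun (x : Fin (N + 1) → ℝ) (j : Fin N) => x (i.succAbove j)) volume
      = Measure.map Prod.snd
          (Measure.map (MeasurableEquiv.piFinSuccAbove (fun _ : Fin (N + 1) => ℝ) i) volume) := by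
    rw [Measure.map_map measurable_snd (MeasurableEquiv.measurable _)]
    rfl
  rw [hmap, he.map_eq, Measure.volume_eq_prod, Measure.map_snd_prod]
  exact Measure.AbsolutelyContinuous.mk fun s _ hs => by simp [hs]

private lemma qmp_sum {N : ℕ} :
    Measure.QuasiMeasurePreserving
      (fun x : Fin (N + 1) → ℝ => ∑ j, x j) volume volume := by
  refine ⟨Finset.univ.measurable_sum fun j _ => measurable_pi_apply j, ?_⟩
  have hsk : MeasurePreserving (fun w : (Fin N → ℝ) × ℝ => (w.1, w.2 + ∑ j, w.1 j))
      (volume.prod volume) (volume.prod volume) :=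
    (MeasurePreserving.id volume).skew_product
      (measurable_snd.add ((Finset.univ.measurable_sum fun j _ =>
        measurable_pi_apply j).comp measurable_fst))
      (Filter.Eventually.of_forall fun w => (measurePreserving_add_right volume _).map_eq)
  have he := volume_preserving_piFinSuccAbove (fun _ : Fin (N + 1) => ℝ) 0
  have hfun : (fun x : Fin (N + 1) → ℝ => ∑ j, x j)
      = Prod.snd ∘ (fun w : (Fin N → ℝ) × ℝ => (w.1, w.2 + ∑ j, w.1 j)) ∘ Prod.swap ∘
          ⇑(MeasurableEquiv.piFinSuccAbove (fun _ : Fin (N + 1) => ℝ) 0) := by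
    funext x
    simp [MeasurableEquiv.piFinSuccAbove, Fin.sum_univ_succ, Fin.zero_succAbove, Fin.tail,
      add_comm]
  have hm1 : Measurable (fun w : (Fin N → ℝ) × ℝ => (w.1, w.2 + ∑ j, w.1 j)) := hsk.measurable
  have hme : Measurable (⇑(MeasurableEquiv.piFinSuccAbove (fun _ : Fin (N + 1) => ℝ) 0)) :=
    MeasurableEquiv.measurable _
  have m1 : Measure.map (⇑(MeasurableEquiv.piFinSuccAbove (fun _ : Fin (N + 1) => ℝ) 0)) volume
      = (volume : Measure ℝ).prod (volume : Measure (Fin N → ℝ)) := by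
    rw [he.map_eq, Measure.volume_eq_prod]
  have m2 : Measure.map (Prod.swap ∘ ⇑(MeasurableEquiv.piFinSuccAbove (fun _ : Fin (N + 1) => ℝ) 0))
      volume = (volume : Measure (Fin N → ℝ)).prod (volume : Measure ℝ) := by
    rw [← Measure.map_map measurable_swap hme, m1,
      (Measure.measurePreserving_swap (μ := (volume : Measure ℝ))
        (ν := (volume : Measure (Fin N → ℝ)))).map_eq]
  have m3 : Measure.map ((fun w : (Fin N → ℝ) × ℝ => (w.1, w.2 + ∑ j, w.1 j)) ∘
        (Prod.swap ∘ ⇑(MeasurableEquiv.piFinSuccAbove (fun _ : Fin (N + 1) => ℝ) 0))) volume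
      = (volume : Measure (Fin N → ℝ)).prod (volume : Measure ℝ) := by
    rw [← Measure.map_map hm1 (measurable_swap.comp hme), m2, hsk.map_eq]
  have hmap : Measure.map (fun x : Fin (N + 1) → ℝ => ∑ j, x j) volume
      = (volume : Measure (Fin N → ℝ)) Set.univ • (volume : Measure ℝ) := by
    rw [hfun, ← Measure.map_map measurable_snd (hm1.comp (measurable_swap.comp hme)), m3,
      Measure.map_snd_prod]
  rw [hmap]
  exact Measure.AbsolutelyContinuous.mk fun s _ hs => by simp [hs]

/-- `Λ(F₀,…,F_m) = ∫_{ℝ^{m+1}} ∏ᵢ Fᵢ(x_{(i)}) ψ(x₀+⋯+x_m) dx`. -/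
noncomputable def simplexForm (m : ℕ) (ψ : ℝ → ℂ)
    (F : Fin (m + 1) → (Fin m → ℝ) → ℂ) : ℂ :=
  ∫ x : Fin (m + 1) → ℝ,
    (∏ i, F i (fun j => x (Fin.succAbove i j))) * ψ (∑ j, x j)

/-- Trivial estimate: if `‖ψ‖₁ ≤ A` then for any Hölder tuple `∑ᵢ 1/pᵢ = 1` one has
`|Λ(F₀,…,F_m)| ≤ C_m A ∏ᵢ ‖Fᵢ‖_{pᵢ}` with `C_m` depending only on `m`. -/
theorem stmt_13 (m : ℕ) (hm : 1 ≤ m) :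
    ∃ C : ℝ, 0 < C ∧
      ∀ (ψ : ℝ → ℂ) (A : ℝ), Integrable ψ → (∫ t, ‖ψ t‖) ≤ A →
      ∀ (p : Fin (m + 1) → ℝ≥0∞), (∀ i, 1 ≤ p i) → (∑ i, (p i)⁻¹ = 1) →
      ∀ F : Fin (m + 1) → (Fin m → ℝ) → ℂ, (∀ i, MemLp (F i) (p i) volume) →
        ‖simplexForm m ψ F‖ ≤ C * A * ∏ i, (eLpNorm (F i) (p i) volume).toReal := by
  obtain ⟨n, rfl⟩ : ∃ n, m = n + 1 := ⟨m - 1, (Nat.succ_pred_eq_of_pos hm).symm⟩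
  refine ⟨1, one_pos, ?_⟩
  intro ψ A hψ hA p hp hsum F hF
  -- measurable representatives
  set F' : Fin (n + 2) → (Fin (n + 1) → ℝ) → ℂ := fun i => (hF i).1.mk (F i) with hF'def
  have hFm : ∀ i, StronglyMeasurable (F' i) := fun i => (hF i).1.stronglyMeasurable_mk
  have hFe : ∀ i, F i =ᵐ[volume] F' i := fun i => (hF i).1.ae_eq_mk
  -- replace `F` by `F'` inside the integral
  have hform : simplexForm (n + 1) ψ F
      = ∫ x : Fin (n + 2) → ℝ,
          (∏ i, F' i (fun j => x (Fin.succAbove i j))) * ψ (∑ j, x j) := by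
    refine integral_congr_ae ?_
    have h1 : ∀ i : Fin (n + 2),
        (fun x : Fin (n + 2) → ℝ => F i (fun j => x (Fin.succAbove i j)))
          =ᵐ[volume] (fun x => F' i (fun j => x (Fin.succAbove i j))) := fun i =>
      (qmp_succAbove i).ae_eq_comp (hFe i)
    filter_upwards [ae_all_iff.mpr h1] with x hx
    rw [Finset.prod_congr rfl fun i _ => hx i]
  -- the nonnegative integrand
  set f : (Fin (n + 2) → ℝ) → ℝ≥0∞ := fun x =>
    (∏ i, (‖F' i (fun j => x (Fin.succAbove i j))‖₊ : ℝ≥0∞)) * (‖ψ (∑ j, x j)‖₊ : ℝ≥0∞)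
    with hfdef
  have hargm : ∀ i : Fin (n + 2),
      Measurable (fun x : Fin (n + 2) → ℝ => (fun j => x (Fin.succAbove i j))) := fun i =>
    measurable_pi_lambda _ fun j => measurable_pi_apply _
  have hfae : AEMeasurable f volume := by
    refine AEMeasurable.mul ?_ ?_
    · exact (Finset.measurable_prod Finset.univ fun i _ =>
        (((hFm i).measurable.comp (hargm i)).nnnorm).coe_nnreal_ennreal).aemeasurable
    · exact (hψ.1.aemeasurable.comp_quasiMeasurePreserving qmp_sum).enorm
  -- the measure-preserving global change of variables
  have hΦ : MeasurePreserving
      (fun z : ℝ × (Fin (n + 1) → ℝ) =>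
        (Fin.cons (z.1 - ∑ j, z.2 j) z.2 : Fin (n + 2) → ℝ))
      (volume.prod volume) volume := by
    refine measurePreserving_cons_aux (fun w t => t - ∑ j, w j) ?_ ?_
    · exact measurable_snd.sub ((Finset.univ.measurable_sum fun j _ =>
        measurable_pi_apply j).comp measurable_fst)
    · exact fun w => measurePreserving_sub_right volume _
  -- inner Hölder estimate
  have hinner : ∀ t : ℝ,
      (∫⁻ u : Fin (n + 1) → ℝ,
        ∏ i, (‖F' i (fun j =>
          (Fin.cons (t - ∑ j', u j') u : Fin (n + 2) → ℝ) (Fin.succAbove i j))‖₊ : ℝ≥0∞))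
      ≤ ∏ i, eLpNorm (F i) (p i) volume := by
    intro t
    set S : Fin (n + 2) → (Fin (n + 1) → ℝ) → (Fin (n + 1) → ℝ) := fun i u j =>
      (Fin.cons (t - ∑ j', u j') u : Fin (n + 2) → ℝ) (Fin.succAbove i j) with hSdef
    have hS : ∀ i, MeasurePreserving (S i) volume volume := by
      intro i
      induction i using Fin.cases with
      | zero =>
        have : S 0 = id := by
          funext u j
          simp [hSdef, Fin.zero_succAbove, Fin.cons_succ]
        rw [this]
        exact MeasurePreserving.id volume
      | succ k =>
        have hmp := (measurePreserving_cons_aux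
            (fun w s => t - (∑ j, w j) - s)
            (((measurable_const.sub ((Finset.univ.measurable_sum fun j _ =>
              measurable_pi_apply j).comp measurable_fst)).sub measurable_snd))
            (fun w => by
              have h1 : MeasurePreserving (fun s : ℝ => -s) volume volume :=
                Measure.measurePreserving_neg volume
              have h2 : MeasurePreserving (fun s : ℝ => (t - ∑ j, w j) + s) volume volume :=
                measurePreserving_add_left volume _
              simpa [Function.comp_def, sub_eq_add_neg] using h2.comp h1)).comp
          (volume_preserving_piFinSuccAbove (fun _ : Fin (n + 1) => ℝ) k)
        have : S k.succ = fun u =>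
            (Fin.cons (t - (∑ j, u (k.succAbove j)) - u k)
              (fun j => u (k.succAbove j)) : Fin (n + 1) → ℝ) := by
          funext u j
          induction j using Fin.cases with
          | zero =>
            simp only [hSdef, Fin.succ_succAbove_zero, Fin.cons_zero]
            rw [Fin.sum_univ_succAbove u k]
            ring
          | succ j' =>
            simp [hSdef, Fin.succ_succAbove_succ, Fin.cons_succ]
        rw [this]
        exact hmp
    have hstep1 : (∫⁻ u : Fin (n + 1) → ℝ, ∏ i, (‖F' i (S i u)‖₊ : ℝ≥0∞))
        = eLpNorm (fun u => ∏ i, F' i (S i u)) 1 volume := by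
      rw [eLpNorm_one_eq_lintegral_enorm]
      refine lintegral_congr fun u => ?_
      rw [enorm_eq_nnnorm, nnnorm_prod, ENNReal.coe_finset_prod]
    calc (∫⁻ u : Fin (n + 1) → ℝ, ∏ i, (‖F' i (S i u)‖₊ : ℝ≥0∞))
        = eLpNorm (fun u => ∏ i, F' i (S i u)) 1 volume := hstep1
      _ ≤ ∏ i, eLpNorm (fun u => F' i (S i u)) (p i) volume := by
          refine holder_prod Finset.univ p _ (fun i _ =>
            ((hFm i).comp_measurable (hS i).measurable).aestronglyMeasurable) ?_
          rw [hsum, inv_one]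
      _ = ∏ i, eLpNorm (F i) (p i) volume := by
          refine Finset.prod_congr rfl fun i _ => ?_
          rw [show (fun u => F' i (S i u)) = (F' i) ∘ (S i) from rfl,
            eLpNorm_comp_measurePreserving (hFm i).aestronglyMeasurable (hS i),
            eLpNorm_congr_ae (hFe i).symm]
  -- the key lintegral bound
  have hP : (∏ i, eLpNorm (F i) (p i) volume) ≠ ⊤ :=
    (ENNReal.prod_lt_top fun i _ => (hF i).2).ne
  have key : (∫⁻ x : Fin (n + 2) → ℝ, f x)
      ≤ (∏ i, eLpNorm (F i) (p i) volume) * ∫⁻ t, (‖ψ t‖₊ : ℝ≥0∞) := by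
    have h1 : (∫⁻ x : Fin (n + 2) → ℝ, f x)
        = ∫⁻ z : ℝ × (Fin (n + 1) → ℝ),
            f (Fin.cons (z.1 - ∑ j, z.2 j) z.2) ∂(volume.prod volume) := by
      conv_lhs => rw [← hΦ.map_eq]
      exact lintegral_map' (hΦ.map_eq.symm ▸ hfae) hΦ.aemeasurable
    rw [h1, lintegral_prod (fun z : ℝ × (Fin (n + 1) → ℝ) =>
      f (Fin.cons (z.1 - ∑ j, z.2 j) z.2))
      (by exact hfae.comp_quasiMeasurePreserving hΦ.quasiMeasurePreserving)]
    have h2 : ∀ t : ℝ, (∫⁻ u : Fin (n + 1) → ℝ, f (Fin.cons (t - ∑ j, u j) u))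
        ≤ (∏ i, eLpNorm (F i) (p i) volume) * (‖ψ t‖₊ : ℝ≥0∞) := by
      intro t
      have hsc : ∀ u : Fin (n + 1) → ℝ,
          (∑ j, (Fin.cons (t - ∑ j', u j') u : Fin (n + 2) → ℝ) j) = t := by
        intro u
        rw [Fin.sum_cons]
        ring
      have h3 : (∫⁻ u : Fin (n + 1) → ℝ, f (Fin.cons (t - ∑ j, u j) u))
          = (∫⁻ u : Fin (n + 1) → ℝ,
              ∏ i, (‖F' i (fun j =>
                (Fin.cons (t - ∑ j', u j') u : Fin (n + 2) → ℝ) (Fin.succAbove i j))‖₊ : ℝ≥0∞))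
              * (‖ψ t‖₊ : ℝ≥0∞) := by
        rw [← lintegral_mul_const' _ _ ENNReal.coe_ne_top]
        refine lintegral_congr fun u => ?_
        simp only [hfdef, hsc u]
      rw [h3]
      exact mul_le_mul_left (hinner t) _
    calc (∫⁻ t, ∫⁻ u : Fin (n + 1) → ℝ, f (Fin.cons (t - ∑ j, u j) u))
        ≤ ∫⁻ t, (∏ i, eLpNorm (F i) (p i) volume) * (‖ψ t‖₊ : ℝ≥0∞) :=
          lintegral_mono fun t => h2 t
      _ = (∏ i, eLpNorm (F i) (p i) volume) * ∫⁻ t, (‖ψ t‖₊ : ℝ≥0∞) :=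
          lintegral_const_mul' _ _ hP
  -- put everything together
  have hψfin : (∫⁻ t, (‖ψ t‖₊ : ℝ≥0∞)) ≠ ⊤ := hψ.2.ne
  have hA0 : (∫⁻ t, (‖ψ t‖₊ : ℝ≥0∞)).toReal ≤ A := by
    rw [show (∫⁻ t, (‖ψ t‖₊ : ℝ≥0∞)) = ∫⁻ t, ‖ψ t‖ₑ from rfl, ← integral_norm_eq_lintegral_enorm hψ.1]
    exact hA
  rw [hform]
  calc ‖∫ x : Fin (n + 2) → ℝ,
        (∏ i, F' i (fun j => x (Fin.succAbove i j))) * ψ (∑ j, x j)‖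
      ≤ (∫⁻ x : Fin (n + 2) → ℝ, ENNReal.ofReal
          ‖(∏ i, F' i (fun j => x (Fin.succAbove i j))) * ψ (∑ j, x j)‖).toReal :=
        norm_integral_le_lintegral_norm _
    _ = (∫⁻ x : Fin (n + 2) → ℝ, f x).toReal := by
        congr 1
        refine lintegral_congr fun x => ?_
        rw [ofReal_norm, enorm_eq_nnnorm, nnnorm_mul, ENNReal.coe_mul, nnnorm_prod,
          ENNReal.coe_finset_prod]
    _ ≤ ((∏ i, eLpNorm (F i) (p i) volume) * ∫⁻ t, (‖ψ t‖₊ : ℝ≥0∞)).toReal :=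
        ENNReal.toReal_mono (ENNReal.mul_ne_top hP hψfin) key
    _ = (∫⁻ t, (‖ψ t‖₊ : ℝ≥0∞)).toReal * ∏ i, (eLpNorm (F i) (p i) volume).toReal := by
        rw [ENNReal.toReal_mul, ENNReal.toReal_prod, mul_comm]
    _ ≤ 1 * A * ∏ i, (eLpNorm (F i) (p i) volume).toReal := by
        rw [one_mul]
        exact mul_le_mul_of_nonneg_right hA0
          (Finset.prod_nonneg fun i _ => ENNReal.toReal_nonneg)
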